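/- Let f: ℝ → ℝ be continuous with an asymptotic expansion f(μ) = Σ_{i=0}^{d} a_i μ^{d-i} + O(μ^{-1+ε}) as μ → +∞ (for every ε > 0) and f(μ) = O(|μ|^{-∞}) as μ → −∞. Then for every integer k ≥ 1, the k-fold repeated integral F_k(λ) = ∫_{-∞}^λ ∫_{-∞}^{λ_1} ⋯ ∫_{-∞}^{λ_{k-1}} f(λ_k) dλ_k ⋯ dλ_1 satisfies λ^{-k} k! F_k(λ) = Σ_{i=0}^{d} [k!(d−i)!/(d−i+k)!] a_i λ^{d-i} + O(λ^{-1+ε}) as λ → +∞, for every ε > 0. -/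

import Mathlib

open MeasureTheory Filter

section Aux

/-- zpow of abs equals rpow of abs. -/
lemma aux_zpow_rpow (x : ℝ) (n : ℕ) : |x| ^ (-(n : ℤ)) = |x| ^ (-(n : ℝ)) := by
  rw [← Real.rpow_intCast |x| (-(n : ℤ))]
  push_cast
  ring_nf

/-- Integrability of `|μ|^p` on `Iic c` for `p < -1`, `c < 0`. -/
lemma aux_int_Iic {p : ℝ} (hp : p < -1) {c : ℝ} (hc : c < 0) :
    IntegrableOn (fun μ : ℝ => |μ| ^ p) (Set.Iic c) := by
  have h1 : IntegrableOn (fun x : ℝ => x ^ p) (Set.Ioi (-c)) :=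
    integrableOn_Ioi_rpow_of_lt hp (by linarith)
  have h2 := (Measure.measurePreserving_neg (volume : Measure ℝ)).integrableOn_comp_preimage
      (Homeomorph.neg ℝ).measurableEmbedding (f := fun x : ℝ => x ^ p) (s := Set.Ioi (-c))
  have hpre : ((fun x : ℝ => -x) ⁻¹' Set.Ioi (-c) : Set ℝ) = Set.Iio c := by
    ext x; simp [neg_lt, lt_neg]
  rw [hpre] at h2
  have h3 : IntegrableOn (fun x : ℝ => (-x) ^ p) (Set.Iio c) := h2.mpr h1
  have h4 : IntegrableOn (fun x : ℝ => |x| ^ p) (Set.Iio c) := by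
    refine h3.congr_fun (fun x hx => ?_) measurableSet_Iio
    rw [abs_of_neg (lt_trans hx hc)]
  exact h4.congr_set_ae Iio_ae_eq_Iic.symm

/-- Value of `∫_{Iic c} |μ|^p` for `p < -1`, `c < 0`. -/
lemma aux_val_Iic {p : ℝ} (hp : p < -1) {c : ℝ} (hc : c < 0) :
    ∫ μ in Set.Iic c, |μ| ^ p = (-c) ^ (p + 1) / (-(p + 1)) := by
  have h0 : (∫ x in Set.Iic c, |(-x)| ^ p) = ∫ x in Set.Ioi (-c), |x| ^ p :=
    integral_comp_neg_Iic c (fun x => |x| ^ p)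
  simp only [abs_neg] at h0
  rw [h0, setIntegral_congr_fun measurableSet_Ioi
      (g := fun x : ℝ => x ^ p) (fun x hx => by
        simp only
        rw [abs_of_pos (lt_trans (by linarith) hx)]),
    integral_Ioi_rpow_of_lt hp (by linarith)]
  rw [div_neg, neg_div]

end Aux

/-- Asymptotics of repeated integrals: if `f` has the expansion
`Σ_{i=0}^d aᵢ μ^{d-i} + O(μ^{-1+ε})` at `+∞` and is rapidly decreasing at `−∞`,
then the `k`-fold repeated integral `F_k` satisfies
`λ^{-k} k! F_k(λ) = Σ [k!(d−i)!/(d−i+k)!] aᵢ λ^{d-i} + O(λ^{-1+ε})`. -/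
theorem stmt_9 (f : ℝ → ℝ) (hf : Continuous f) (d : ℕ) (a : Fin (d + 1) → ℝ)
    (hexp : ∀ ε : ℝ, 0 < ε →
      (fun μ : ℝ => f μ - ∑ i : Fin (d + 1), a i * μ ^ (d - (i : ℕ))) =O[atTop]
        (fun μ : ℝ => μ ^ (-1 + ε)))
    (hbot : ∀ n : ℕ, f =O[atBot] (fun μ : ℝ => |μ| ^ (-(n : ℤ))))
    (F : ℕ → ℝ → ℝ) (hF0 : F 0 = f)
    (hFs : ∀ (k : ℕ) (l : ℝ), F (k + 1) l = ∫ μ in Set.Iic l, F k μ) :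
    ∀ k : ℕ, 1 ≤ k → ∀ ε : ℝ, 0 < ε →
      (fun l : ℝ => l ^ (-(k : ℤ)) * (Nat.factorial k) * F k l
          - ∑ i : Fin (d + 1),
              ((Nat.factorial k * Nat.factorial (d - (i : ℕ)) : ℕ) : ℝ) / (Nat.factorial (d - (i : ℕ) + k) : ℝ)
                * a i * l ^ (d - (i : ℕ))) =O[atTop]
        (fun l : ℝ => l ^ (-1 + ε)) := by
  classical
  -- the polynomial part of the expansion of `F k`
  let P : ℕ → ℝ → ℝ := fun k l =>
    ∑ i : Fin (d + 1),
      ((Nat.factorial (d - (i : ℕ)) : ℝ) / (Nat.factorial (d - (i : ℕ) + k) : ℝ))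
        * a i * l ^ (d - (i : ℕ) + k)
  have main : ∀ k : ℕ, Continuous (F k) ∧
      (∀ n : ℕ, F k =O[atBot] fun μ : ℝ => |μ| ^ (-(n : ℤ))) ∧
      (∀ ε : ℝ, 0 < ε →
        (fun l : ℝ => F k l - P k l) =O[atTop] fun l : ℝ => l ^ ((k : ℝ) - 1 + ε)) := by
    intro k
    induction k with
    | zero =>
      refine ⟨hF0 ▸ hf, hF0 ▸ hbot, fun ε hε => ?_⟩
      have hP0 : ∀ l : ℝ, P 0 l = ∑ i : Fin (d + 1), a i * l ^ (d - (i : ℕ)) := by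
        intro l
        refine Finset.sum_congr rfl fun i _ => ?_
        simp only [P, Nat.add_zero]
        rw [div_self (Nat.cast_ne_zero.mpr (Nat.factorial_ne_zero (d - (i : ℕ)))), one_mul]
      have h := hexp ε hε
      have heq : ((0 : ℕ) : ℝ) - 1 + ε = -1 + ε := by norm_num
      rw [heq]
      refine h.congr' (Eventually.of_forall fun l => ?_) EventuallyEq.rfl
      simp only [hF0, hP0]
    | succ k ih =>
      obtain ⟨hc, hb, ht⟩ := ih
      -- integrability of `F k` on every `Iic l`
      have hInt : ∀ l : ℝ, IntegrableOn (F k) (Set.Iic l) := by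
        intro l
        refine LocallyIntegrableOn.integrableOn_of_isBigO_atBot
          (g := fun μ : ℝ => |μ| ^ (-(2 : ℝ)))
          ((hc.locallyIntegrable).locallyIntegrableOn _) ?_ ?_
        · refine (hb 2).congr' EventuallyEq.rfl (Eventually.of_forall fun μ => ?_)
          show |μ| ^ (-((2 : ℕ) : ℤ)) = |μ| ^ (-(2 : ℝ))
          rw [aux_zpow_rpow μ 2]
          norm_num
        · exact ⟨Set.Iic (-1), Iic_mem_atBot _,
            aux_int_Iic (by norm_num) (by norm_num)⟩
      -- representation of `F (k+1)`
      have hrepr : ∀ l : ℝ,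
          F (k + 1) l = (∫ μ in Set.Iic (0 : ℝ), F k μ) + ∫ μ in (0 : ℝ)..l, F k μ := by
        intro l
        rw [hFs k l, ← intervalIntegral.integral_Iic_sub_Iic (hInt 0) (hInt l)]
        ring
      -- continuity
      have hcont : Continuous (F (k + 1)) := by
        have h1 := intervalIntegral.continuous_primitive (μ := volume) (f := F k)
          (fun a b => hc.intervalIntegrable a b) 0
        exact (continuous_const.add h1).congr fun l => (hrepr l).symm
      refine ⟨hcont, ?_, ?_⟩
      -- decay at -∞
      · intro n
        obtain ⟨C, hC⟩ := (hb (n + 2)).bound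
        obtain ⟨M0, hM0⟩ := eventually_atBot.mp hC
        set C' : ℝ := |C| with hC'def
        have hC'0 : (0 : ℝ) ≤ C' := abs_nonneg _
        set M : ℝ := min M0 (-1) with hMdef
        have hM1 : M ≤ -1 := min_le_right _ _
        rw [Asymptotics.isBigO_iff]
        refine ⟨C' / (n + 1), eventually_atBot.mpr ⟨M, fun l hl => ?_⟩⟩
        have hl1 : l ≤ -1 := le_trans hl hM1
        have hlneg : l < 0 := by linarith
        have habs : (1 : ℝ) ≤ |l| := by rw [abs_of_neg hlneg]; linarith
        have hbd : ∀ μ ∈ Set.Iic l, |F k μ| ≤ C' * |μ| ^ (-((n : ℝ) + 2)) := by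
          intro μ hμ
          have h1 := hM0 μ (le_trans hμ (le_trans hl (min_le_left _ _)))
          rw [Real.norm_eq_abs, Real.norm_eq_abs,
            abs_of_nonneg (zpow_nonneg (abs_nonneg μ) _)] at h1
          have h2 : |μ| ^ (-((n + 2 : ℕ) : ℤ)) = |μ| ^ (-((n : ℝ) + 2)) := by
            rw [aux_zpow_rpow μ (n + 2)]
            push_cast
            ring_nf
          rw [h2] at h1
          refine le_trans h1 (mul_le_mul_of_nonneg_right (le_abs_self C)
            (Real.rpow_nonneg (abs_nonneg μ) _))
        have hIntAbs : IntegrableOn (fun μ : ℝ => |F k μ|) (Set.Iic l) := (hInt l).abs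
        have hIntRpow : IntegrableOn (fun μ : ℝ => C' * |μ| ^ (-((n : ℝ) + 2))) (Set.Iic l) :=
          (aux_int_Iic (by push_cast; linarith [Nat.cast_nonneg (α := ℝ) n]) hlneg).const_mul C'
        have key : ‖F (k + 1) l‖ ≤ C' * ((-l) ^ (-((n : ℝ) + 1)) / ((n : ℝ) + 1)) := by
          rw [hFs k l, Real.norm_eq_abs]
          calc |∫ μ in Set.Iic l, F k μ| ≤ ∫ μ in Set.Iic l, |F k μ| := by
                simpa [Real.norm_eq_abs] using
                  norm_integral_le_integral_norm (μ := volume.restrict (Set.Iic l)) (F k)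
          _ ≤ ∫ μ in Set.Iic l, C' * |μ| ^ (-((n : ℝ) + 2)) :=
                setIntegral_mono_on hIntAbs hIntRpow measurableSet_Iic hbd
          _ = C' * ∫ μ in Set.Iic l, |μ| ^ (-((n : ℝ) + 2)) := integral_const_mul _ _
          _ = C' * ((-l) ^ (-((n : ℝ) + 1)) / ((n : ℝ) + 1)) := by
                rw [aux_val_Iic (by push_cast; linarith [Nat.cast_nonneg (α := ℝ) n]) hlneg,
                  show -((n : ℝ) + 2) + 1 = -((n : ℝ) + 1) by ring,
                  show -(-((n : ℝ) + 1)) = (n : ℝ) + 1 by ring]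
        refine le_trans key ?_
        have hnl : -l = |l| := (abs_of_neg hlneg).symm
        rw [hnl, Real.norm_eq_abs, abs_of_nonneg (zpow_nonneg (abs_nonneg l) _),
          aux_zpow_rpow l n]
        have hmono : |l| ^ (-((n : ℝ) + 1)) ≤ |l| ^ (-(n : ℝ)) :=
          Real.rpow_le_rpow_of_exponent_le habs (by linarith)
        have hpos : (0 : ℝ) < (n : ℝ) + 1 := by positivity
        calc C' * (|l| ^ (-((n : ℝ) + 1)) / ((n : ℝ) + 1))
            = (C' / ((n : ℝ) + 1)) * |l| ^ (-((n : ℝ) + 1)) := by ring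
          _ ≤ (C' / ((n : ℝ) + 1)) * |l| ^ (-(n : ℝ)) := by
              exact mul_le_mul_of_nonneg_left hmono (by positivity)
          _ = C' / ((n : ℕ) + 1 : ℝ) * |l| ^ (-(n : ℝ)) := by norm_num
      -- expansion at +∞
      · intro ε hε
        set g : ℝ → ℝ := fun l => F k l - P k l with hgdef
        have hPc : Continuous (P k) := by
          apply continuous_finset_sum
          intro i _
          fun_prop
        have hgcont : Continuous g := hc.sub hPc
        -- integral of the polynomial part
        have hPint : ∀ l : ℝ, (∫ μ in (0 : ℝ)..l, P k μ) = P (k + 1) l := by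
          intro l
          rw [intervalIntegral.integral_finset_sum]
          · refine Finset.sum_congr rfl fun i _ => ?_
            rw [intervalIntegral.integral_const_mul, integral_pow]
            have hfac : ((Nat.factorial (d - (i : ℕ) + (k + 1)) : ℝ))
                = (Nat.factorial (d - (i : ℕ) + k) : ℝ) * ((d - (i : ℕ) + k : ℕ) + 1 : ℝ) := by
              have : d - (i : ℕ) + (k + 1) = (d - (i : ℕ) + k) + 1 := by ring
              rw [this, Nat.factorial_succ]
              push_cast
              ring
            have hne1 : ((Nat.factorial (d - (i : ℕ) + k) : ℝ)) ≠ 0 :=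
              Nat.cast_ne_zero.mpr (Nat.factorial_ne_zero _)
            have hne2 : ((d - (i : ℕ) + k : ℕ) + 1 : ℝ) ≠ 0 := by positivity
            have hexp2 : d - (i : ℕ) + k + 1 = d - (i : ℕ) + (k + 1) := by ring
            rw [hexp2]
            field_simp [hfac]
            rw [hfac, zero_pow (by omega), sub_zero]
            ring
          · intro i _
            exact (by fun_prop : Continuous fun x : ℝ =>
              ((Nat.factorial (d - (i : ℕ)) : ℝ) / (Nat.factorial (d - (i : ℕ) + k) : ℝ))
                * a i * x ^ (d - (i : ℕ) + k)).intervalIntegrable _ _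
        have hgi : ∀ u v : ℝ, IntervalIntegrable g volume u v := fun u v =>
          hgcont.intervalIntegrable u v
        -- representation of the error of `F (k+1)`
        have herr : ∀ l : ℝ, F (k + 1) l - P (k + 1) l
            = (∫ μ in Set.Iic (0 : ℝ), F k μ) + ∫ μ in (0 : ℝ)..l, g μ := by
          intro l
          have hsum : (∫ μ in (0 : ℝ)..l, F k μ)
              = (∫ μ in (0 : ℝ)..l, g μ) + ∫ μ in (0 : ℝ)..l, P k μ := by
            rw [← intervalIntegral.integral_add (hgi 0 l) (hPc.intervalIntegrable 0 l)]
            apply intervalIntegral.integral_congr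
            intro μ _
            simp [hgdef]
          rw [hrepr l, hsum, hPint l]
          ring
        -- the big-O bound
        obtain ⟨C, hC⟩ := (ht ε hε).bound
        obtain ⟨M0, hM0⟩ := eventually_atTop.mp hC
        set C' : ℝ := |C| with hC'def
        have hC'0 : (0 : ℝ) ≤ C' := abs_nonneg _
        set M : ℝ := max M0 1 with hMdef
        have hM1 : (1 : ℝ) ≤ M := le_max_right _ _
        have hMpos : (0 : ℝ) < M := lt_of_lt_of_le one_pos hM1
        have hq : (-1 : ℝ) < (k : ℝ) - 1 + ε := by
          have : (0 : ℝ) ≤ (k : ℝ) := Nat.cast_nonneg k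
          linarith
        have hkε : (0 : ℝ) < (k : ℝ) + ε := by
          have : (0 : ℝ) ≤ (k : ℝ) := Nat.cast_nonneg k
          linarith
        set K : ℝ := |(∫ μ in Set.Iic (0 : ℝ), F k μ) + ∫ μ in (0 : ℝ)..M, g μ| with hKdef
        rw [Asymptotics.isBigO_iff]
        refine ⟨K + C' / ((k : ℝ) + ε), eventually_atTop.mpr ⟨M, fun l hl => ?_⟩⟩
        have hl1 : (1 : ℝ) ≤ l := le_trans hM1 hl
        have hlpos : (0 : ℝ) < l := lt_of_lt_of_le one_pos hl1
        have hbd : ∀ μ ∈ Set.Icc M l, |g μ| ≤ C' * μ ^ ((k : ℝ) - 1 + ε) := by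
          intro μ hμ
          have h1 := hM0 μ (le_trans (le_max_left _ _) hμ.1)
          rw [Real.norm_eq_abs, Real.norm_eq_abs,
            abs_of_nonneg (Real.rpow_nonneg (le_trans (le_trans zero_le_one hM1) hμ.1) _)] at h1
          exact le_trans h1 (mul_le_mul_of_nonneg_right (le_abs_self C)
            (Real.rpow_nonneg (le_of_lt (lt_of_lt_of_le hMpos hμ.1)) _))
        have hrint : IntervalIntegrable (fun μ : ℝ => C' * μ ^ ((k : ℝ) - 1 + ε)) volume M l := by
          apply ContinuousOn.intervalIntegrable
          apply ContinuousOn.mul continuousOn_const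
          intro x hx
          rw [Set.uIcc_of_le hl] at hx
          have hx0 : x ≠ 0 := ne_of_gt (lt_of_lt_of_le hMpos hx.1)
          exact (Real.continuousAt_rpow_const x _ (Or.inl hx0)).continuousWithinAt
        have hsplit : (∫ μ in (0 : ℝ)..l, g μ)
            = (∫ μ in (0 : ℝ)..M, g μ) + ∫ μ in M..l, g μ :=
          (intervalIntegral.integral_add_adjacent_intervals (hgi 0 M) (hgi M l)).symm
        have hintbound : |∫ μ in M..l, g μ| ≤ C' / ((k : ℝ) + ε) * l ^ ((k : ℝ) + ε) := by
          calc |∫ μ in M..l, g μ| ≤ ∫ μ in M..l, |g μ| := by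
                simpa [Real.norm_eq_abs] using
                  intervalIntegral.norm_integral_le_integral_norm (f := g) (μ := volume) hl
          _ ≤ ∫ μ in M..l, C' * μ ^ ((k : ℝ) - 1 + ε) := by
                apply intervalIntegral.integral_mono_on hl
                  (hgcont.abs.intervalIntegrable _ _) hrint hbd
          _ = C' * ∫ μ in M..l, μ ^ ((k : ℝ) - 1 + ε) := intervalIntegral.integral_const_mul _ _
          _ = C' * ((l ^ ((k : ℝ) - 1 + ε + 1) - M ^ ((k : ℝ) - 1 + ε + 1)) / ((k : ℝ) - 1 + ε + 1)) := by
                rw [integral_rpow (Or.inl hq)]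
          _ ≤ C' / ((k : ℝ) + ε) * l ^ ((k : ℝ) + ε) := by
                have he1 : (k : ℝ) - 1 + ε + 1 = (k : ℝ) + ε := by ring
                rw [he1]
                have hMp : (0 : ℝ) ≤ M ^ ((k : ℝ) + ε) := Real.rpow_nonneg hMpos.le _
                have h3 : (l ^ ((k : ℝ) + ε) - M ^ ((k : ℝ) + ε)) / ((k : ℝ) + ε)
                    ≤ l ^ ((k : ℝ) + ε) / ((k : ℝ) + ε) := by
                  gcongr
                  linarith
                calc C' * ((l ^ ((k : ℝ) + ε) - M ^ ((k : ℝ) + ε)) / ((k : ℝ) + ε))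
                    ≤ C' * (l ^ ((k : ℝ) + ε) / ((k : ℝ) + ε)) :=
                      mul_le_mul_of_nonneg_left h3 hC'0
                  _ = C' / ((k : ℝ) + ε) * l ^ ((k : ℝ) + ε) := by ring
        have hone : (1 : ℝ) ≤ l ^ ((k : ℝ) + ε) := Real.one_le_rpow hl1 hkε.le
        have hK0 : (0 : ℝ) ≤ K := abs_nonneg _
        have hfin : ‖F (k + 1) l - P (k + 1) l‖ ≤ (K + C' / ((k : ℝ) + ε)) * l ^ ((k : ℝ) + ε) := by
          rw [herr l, hsplit, Real.norm_eq_abs, ← add_assoc]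
          have h1 : |((∫ μ in Set.Iic (0 : ℝ), F k μ) + ∫ μ in (0 : ℝ)..M, g μ) + ∫ μ in M..l, g μ|
              ≤ K + |∫ μ in M..l, g μ| := by
            rw [hKdef]
            exact abs_add_le _ _
          refine le_trans h1 ?_
          have h2 := hintbound
          have hc0 : (0 : ℝ) ≤ C' / ((k : ℝ) + ε) := by positivity
          nlinarith [hone, hK0, hc0]
        refine hfin.trans (le_of_eq ?_)
        have he2 : ((k + 1 : ℕ) : ℝ) - 1 + ε = (k : ℝ) + ε := by push_cast; ring
        rw [he2, Real.norm_eq_abs, abs_of_nonneg (Real.rpow_nonneg hlpos.le _)]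
  -- now derive the statement from `main`
  intro k hk ε hε
  obtain ⟨-, -, ht⟩ := main k
  have h2 : (fun l : ℝ => l ^ (-(k : ℤ)) * ((Nat.factorial k : ℕ) : ℝ)) =O[atTop]
      fun l : ℝ => l ^ (-(k : ℝ)) := by
    rw [Asymptotics.isBigO_iff]
    refine ⟨Nat.factorial k, eventually_atTop.mpr ⟨1, fun l hl => ?_⟩⟩
    have hlpos : (0 : ℝ) < l := lt_of_lt_of_le one_pos hl
    rw [Real.norm_eq_abs, Real.norm_eq_abs, abs_mul,
      abs_of_nonneg (zpow_nonneg hlpos.le _), abs_of_nonneg (Nat.cast_nonneg _),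
      abs_of_nonneg (Real.rpow_nonneg hlpos.le _), ← Real.rpow_intCast l (-(k : ℤ))]
    push_cast
    rw [mul_comm]
  have h3 := h2.mul (ht ε hε)
  have h4 : (fun l : ℝ => l ^ (-(k : ℤ)) * ((Nat.factorial k : ℕ) : ℝ) * (F k l - P k l))
      =O[atTop] fun l : ℝ => l ^ (-1 + ε) := by
    refine h3.congr' EventuallyEq.rfl (eventually_atTop.mpr ⟨1, fun l hl => ?_⟩)
    have hlpos : (0 : ℝ) < l := lt_of_lt_of_le one_pos hl
    show l ^ (-(k : ℝ)) * l ^ ((k : ℝ) - 1 + ε) = l ^ (-1 + ε)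
    rw [← Real.rpow_add hlpos]
    congr 1
    ring
  refine h4.congr' (eventually_atTop.mpr ⟨1, fun l hl => ?_⟩) EventuallyEq.rfl
  have hlpos : (0 : ℝ) < l := lt_of_lt_of_le one_pos hl
  have hPk : l ^ (-(k : ℤ)) * ((Nat.factorial k : ℕ) : ℝ) * P k l
      = ∑ i : Fin (d + 1),
          ((Nat.factorial k * Nat.factorial (d - (i : ℕ)) : ℕ) : ℝ)
            / (Nat.factorial (d - (i : ℕ) + k) : ℝ) * a i * l ^ (d - (i : ℕ)) := by
    simp only [P, Finset.mul_sum]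
    refine Finset.sum_congr rfl fun i _ => ?_
    have hlk : l ^ (-(k : ℤ)) = (l ^ k)⁻¹ := by rw [zpow_neg, zpow_natCast]
    have h0 : (l : ℝ) ^ k ≠ 0 := pow_ne_zero _ hlpos.ne'
    have hfne : ((Nat.factorial (d - (i : ℕ) + k) : ℕ) : ℝ) ≠ 0 :=
      Nat.cast_ne_zero.mpr (Nat.factorial_ne_zero _)
    rw [pow_add, hlk]
    push_cast
    field_simp
  show l ^ (-(k : ℤ)) * ((Nat.factorial k : ℕ) : ℝ) * (F k l - P k l)
      = l ^ (-(k : ℤ)) * ((Nat.factorial k : ℕ) : ℝ) * F k l - _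
  rw [mul_sub, hPk]
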